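/- For every ε > 0 there exists δ > 0 such that the following holds. Let θ ∈ (0, π/2], let z = re^{iα} with r > 0, α ∈ (0, θ), write β = ∠01z (the angle at vertex 1 of the triangle 0,1,z), and suppose α + β ≤ θ and β < δθ. Then for every 0 < t < 1, the angle β' = ∠01z^t satisfies β' < εθ. -/

import Mathlib

open Real

lemma ang_eq_abs_arg (w : ℂ) (hw : w ≠ 1) :
    EuclideanGeometry.angle (0 : ℂ) 1 w = |Complex.arg (1 - w)| := by
  have h : EuclideanGeometry.angle (0 : ℂ) 1 w
      = InnerProductGeometry.angle ((0 : ℂ) - 1) (w - 1) := rfl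
  have h1 : ((0:ℂ) - 1) = (-1) * 1 := by ring
  have h2 : (w - 1) = (-1) * (1 - w) := by ring
  rw [h, h1, h2, Complex.angle_mul_left (by norm_num),
    Complex.angle_one_left (sub_ne_zero.mpr (Ne.symm hw))]

lemma abs_arg_le_ratio {v : ℂ} (hre : 0 < v.re) (him : v.im < 0) :
    |v.arg| ≤ -v.im / v.re := by
  have harg : v.arg < 0 := Complex.arg_neg_iff.mpr him
  have habs : |v.arg| = -v.arg := abs_of_neg harg
  have h1 : |v.arg| ≤ Real.tan |v.arg| :=
    Real.le_tan (abs_nonneg _) (by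
      have hlo : -(π/2) < v.arg := Complex.neg_pi_div_two_lt_arg_iff.mpr (Or.inl hre)
      rw [habs]; linarith)
  have h2 : Real.tan |v.arg| = -v.im / v.re := by
    rw [habs, Real.tan_neg, Complex.tan_arg, neg_div]
  linarith [h2 ▸ h1]

lemma ratio_le_two_arg {v : ℂ} (hre : 0 < v.re) (him : v.im < 0) (hb : |v.arg| ≤ π/4) :
    -v.im / v.re ≤ 2 * |v.arg| := by
  have harg : v.arg < 0 := Complex.arg_neg_iff.mpr him
  have habs : |v.arg| = -v.arg := abs_of_neg harg
  have h2 : Real.tan |v.arg| = -v.im / v.re := by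
    rw [habs, Real.tan_neg, Complex.tan_arg, neg_div]
  rw [← h2, Real.tan_eq_sin_div_cos]
  have hb0 : (0:ℝ) ≤ |v.arg| := abs_nonneg _
  have hsin : Real.sin |v.arg| ≤ |v.arg| := Real.sin_le hb0
  have hcos : Real.cos (π/4) ≤ Real.cos |v.arg| :=
    Real.cos_le_cos_of_nonneg_of_le_pi hb0 (by linarith [Real.pi_pos]) hb
  have hc4 : (1:ℝ)/2 ≤ Real.cos (π/4) := by
    rw [Real.cos_pi_div_four]
    nlinarith [Real.sq_sqrt (by norm_num : (2:ℝ) ≥ 0), Real.sqrt_nonneg 2]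
  have hcpos : (0:ℝ) < Real.cos |v.arg| := by linarith
  have hsin0 : 0 ≤ Real.sin |v.arg| :=
    Real.sin_nonneg_of_nonneg_of_le_pi hb0 (by linarith [Real.pi_pos])
  rw [div_le_iff₀ hcpos]
  nlinarith

theorem stmt8 :
    ∀ ε > (0 : ℝ), ∃ δ > (0 : ℝ), ∀ θ : ℝ, 0 < θ → θ ≤ π / 2 →
      ∀ r : ℝ, 0 < r → ∀ α : ℝ, 0 < α → α < θ →
        ∀ z : ℂ, z = (r : ℂ) * Complex.exp (α * Complex.I) →
          α + EuclideanGeometry.angle (0 : ℂ) 1 z ≤ θ →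
          EuclideanGeometry.angle (0 : ℂ) 1 z < δ * θ →
          ∀ t : ℝ, 0 < t → t < 1 →
            EuclideanGeometry.angle (0 : ℂ) 1 (z ^ (t : ℂ)) < ε * θ := by
  intro ε hε
  have hπ := Real.pi_pos
  have hπ3 : (3:ℝ) < π := by linarith [Real.pi_gt_three]
  set E := min ε 1 with hEdef
  have hE0 : 0 < E := lt_min hε one_pos
  have hEε : E ≤ ε := min_le_left _ _
  have hE1 : E ≤ 1 := min_le_right _ _
  set C := Real.exp (2 / E) with hCdef
  have hC1 : 1 ≤ C := Real.one_le_exp (by positivity)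
  have hC0 : 0 < C := lt_of_lt_of_le one_pos hC1
  refine ⟨min (E / (3 * π * C)) (1 / (π ^ 3 * C)), lt_min (by positivity) (by positivity), ?_⟩
  intro θ hθ hθπ r hr α hα hαθ z hz hsum hβ t ht ht1
  set δ := min (E / (3 * π * C)) (1 / (π ^ 3 * C)) with hδdef
  have hδ0 : 0 < δ := lt_min (by positivity) (by positivity)
  have hδ1 : δ * (3 * π * C) ≤ E := by
    rw [← le_div_iff₀ (by positivity)]; exact min_le_left _ _
  have hδ2 : δ * (π ^ 3 * C) ≤ 1 := by
    rw [← le_div_iff₀ (by positivity)]; exact min_le_right _ _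
  have h27 : (27:ℝ) ≤ π^3 := by nlinarith only [hπ3, mul_pos (sub_pos.mpr hπ3) hπ, mul_pos (mul_pos (sub_pos.mpr hπ3) hπ) hπ]
  have hδ27 : δ ≤ 1/27 := by
    nlinarith only [hδ2, mul_le_mul_of_nonneg_left h27 hδ0.le,
      mul_le_mul_of_nonneg_left hC1 (by positivity : (0:ℝ) ≤ δ * π^3)]
  -- basic facts
  have hαπ2 : α < π/2 := lt_of_lt_of_le hαθ hθπ
  have hsinα : 0 < Real.sin α := Real.sin_pos_of_pos_of_lt_pi hα (by linarith)
  have hcosα : 0 < Real.cos α := Real.cos_pos_of_mem_Ioo ⟨by linarith, hαπ2⟩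
  have hcosα1 : Real.cos α ≤ 1 := Real.cos_le_one α
  have hcosα2 : 1 - Real.cos α ≤ α^2/2 := by
    have h := Real.one_sub_sq_div_two_le_cos (x := α); linarith only [h]
  have hsinJ : 2/π * α ≤ Real.sin α := Real.mul_le_sin hα.le hαπ2.le
  -- z coordinates
  have hzL : z = Complex.exp (↑(Real.log r) + ↑α * Complex.I) := by
    rw [hz, Complex.exp_add, ← Complex.ofReal_exp, Real.exp_log hr]
  have hzre : z.re = r * Real.cos α := by
    rw [hzL, Complex.exp_re]; simp [Real.exp_log hr]
  have hzim : z.im = r * Real.sin α := by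
    rw [hzL, Complex.exp_im]; simp [Real.exp_log hr]
  have him : 0 < z.im := by rw [hzim]; positivity
  have hz1 : z ≠ 1 := by
    intro h; rw [h] at him; simp at him
  -- β
  have hβeq : EuclideanGeometry.angle (0:ℂ) 1 z = |Complex.arg (1 - z)| :=
    ang_eq_abs_arg z hz1
  set β := EuclideanGeometry.angle (0:ℂ) 1 z with hβdef
  have hβ0 : 0 ≤ β := by rw [hβeq]; exact abs_nonneg _
  have hβπ4 : β < π/4 := by
    have h1 : δ * θ ≤ (1/27) * (π/2) := mul_le_mul hδ27 hθπ hθ.le (by norm_num)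
    linarith only [hβ, h1, hπ]
  have hvim : (1 - z).im < 0 := by
    simp only [Complex.sub_im, Complex.one_im]; linarith only [him]
  have hvre : 0 < (1 - z).re := by
    have hv0 : (1:ℂ) - z ≠ 0 := sub_ne_zero.mpr (Ne.symm hz1)
    have habs : 0 < ‖1 - z‖ := norm_pos_iff.mpr hv0
    have hargb : |Complex.arg (1-z)| < π/2 := by
      rw [← hβeq]; linarith only [hβπ4, hπ]
    have hcos : 0 < Real.cos (Complex.arg (1-z)) :=
      Real.cos_pos_of_mem_Ioo
        ⟨by cases abs_lt.mp hargb with | intro a b => linarith only [a],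
         by cases abs_lt.mp hargb with | intro a b => linarith only [b]⟩
    have heq := Complex.norm_mul_cos_arg (1 - z)
    rw [← heq]; exact mul_pos habs hcos
  have hvre' : (1 - z).re = 1 - r * Real.cos α := by
    simp only [Complex.sub_re, Complex.one_re, hzre]
  have hvim' : (1 - z).im = -(r * Real.sin α) := by
    simp only [Complex.sub_im, Complex.one_im, hzim]; ring
  have hx1 : 0 < 1 - r * Real.cos α := hvre' ▸ hvre
  -- y < 2 δθ (1 - x)
  have hy_lt : r * Real.sin α < 2 * (δ*θ) * (1 - r * Real.cos α) := by
    have h1 : -(1-z).im / (1-z).re ≤ 2 * β := by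
      rw [hβeq]
      exact ratio_le_two_arg hvre hvim (by rw [← hβeq]; linarith only [hβπ4])
    rw [hvre', hvim', neg_neg] at h1
    rw [div_le_iff₀ hx1] at h1
    have h3 : 2 * β * (1 - r * Real.cos α) < 2 * (δ*θ) * (1 - r * Real.cos α) :=
      mul_lt_mul_of_pos_right (by linarith only [hβ]) hx1
    linarith only [h1, h3]
  -- r < 1
  have hr1 : r < 1 := by
    by_contra hcon
    push_neg at hcon
    have p1 : 0 ≤ (r - 1) * Real.cos α := mul_nonneg (by linarith only [hcon]) hcosα.le
    have h1 : 1 - r * Real.cos α ≤ α^2/2 := by linarith only [p1, hcosα2]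
    have p2 : 0 ≤ (r - 1) * Real.sin α := mul_nonneg (by linarith only [hcon]) hsinα.le
    have h2 : Real.sin α ≤ r * Real.sin α := by linarith only [p2]
    have h3' : 2 * (δ*θ) * (1 - r * Real.cos α) ≤ 2 * (δ*θ) * (α^2/2) :=
      mul_le_mul_of_nonneg_left h1 (by positivity)
    have h3 : 2/π * α < 2 * (δ*θ) * (α^2/2) := by
      linarith only [hsinJ, h2, hy_lt, h3']
    -- now contradiction
    have hδπ3 : δ * π^3 ≤ 1 := by
      nlinarith only [hδ2, mul_le_mul_of_nonneg_left hC1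
        (by positivity : (0:ℝ) ≤ δ * π^3)]
    have hδπ3' : δ ≤ 1/π^3 := by
      rw [le_div_iff₀ (by positivity)]; linarith only [hδπ3]
    have e1 : δ * θ ≤ 1/π^3 * (π/2) := mul_le_mul hδπ3' hθπ hθ.le (by positivity)
    have e2 : α^2 ≤ (π/2) * α := by
      nlinarith only [mul_nonneg (by linarith only [hαπ2] : (0:ℝ) ≤ π/2 - α) hα.le]
    have e3 : (δ*θ) * (α^2) ≤ (1/π^3 * (π/2)) * ((π/2) * α) :=
      mul_le_mul e1 e2 (sq_nonneg α) (by positivity)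
    have e4 : (1/π^3 * (π/2)) * ((π/2) * α) = 1/(4*π) * α := by
      field_simp; ring
    have hfr : (1:ℝ)/(4*π) < 2/π := by
      rw [div_lt_div_iff₀ (by positivity) (by positivity)]; nlinarith only [hπ]
    nlinarith only [h3, e3, e4, hfr, hα, mul_pos (by linarith only [hfr] :
      (0:ℝ) < 2/π - 1/(4*π)) hα]
  -- setup w = z^t
  have hl0 : Real.log r < 0 := Real.log_neg hr hr1
  have hlr0 : 0 < -(Real.log r) := by linarith only [hl0]
  have hlogz : Complex.log z = ↑(Real.log r) + ↑α * Complex.I := by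
    rw [hzL, Complex.log_exp] <;> simp <;> linarith
  have hz0 : z ≠ 0 := by rw [hzL]; exact Complex.exp_ne_zero _
  have hwt : z ^ (t:ℂ) = Complex.exp (↑(t * Real.log r) + ↑(t*α) * Complex.I) := by
    rw [Complex.cpow_def_of_ne_zero hz0, hlogz]
    congr 1
    push_cast
    ring
  set ρ := Real.exp (t * Real.log r) with hρdef
  have hwre : (z ^ (t:ℂ)).re = ρ * Real.cos (t*α) := by
    rw [hwt, Complex.exp_re]; simp; exact Or.inl rfl
  have hwim : (z ^ (t:ℂ)).im = ρ * Real.sin (t*α) := by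
    rw [hwt, Complex.exp_im]; simp; exact Or.inl rfl
  have hρ0 : 0 < ρ := Real.exp_pos _
  have hs : 0 < -(t * Real.log r) := by
    nlinarith only [mul_pos ht hlr0]
  have hρs : ρ * (-(t * Real.log r)) ≤ 1 - ρ := by
    have h1 := Real.add_one_le_exp (-(t * Real.log r))
    have h2 : ρ * Real.exp (-(t * Real.log r)) = 1 := by
      rw [← Real.exp_add]; simp
    nlinarith only [mul_le_mul_of_nonneg_left h1 hρ0.le, h2]
  have htα : 0 < t * α := mul_pos ht hα
  have htαπ : t * α < π/2 := by
    have h := mul_lt_mul_of_pos_right ht1 hα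
    rw [one_mul] at h
    linarith only [h, hαπ2]
  have hsin_t : 0 < Real.sin (t*α) := Real.sin_pos_of_pos_of_lt_pi htα (by linarith)
  have hcos_t : Real.cos (t*α) ≤ 1 := Real.cos_le_one _
  have hwim0 : 0 < (z ^ (t:ℂ)).im := by rw [hwim]; positivity
  have hw1 : z ^ (t:ℂ) ≠ 1 := by
    intro h; rw [h] at hwim0; simp at hwim0
  have hx't : 0 < 1 - ρ * Real.cos (t*α) := by
    have m5 : ρ * Real.cos (t*α) ≤ ρ * 1 := mul_le_mul_of_nonneg_left hcos_t hρ0.le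
    have m6 := mul_pos hρ0 hs
    linarith only [m5, m6, hρs]
  have hv're2 : (1 - z ^ (t:ℂ)).re = 1 - ρ * Real.cos (t*α) := by
    simp only [Complex.sub_re, Complex.one_re, hwre]
  have hv'im2 : (1 - z ^ (t:ℂ)).im = -(ρ * Real.sin (t*α)) := by
    simp only [Complex.sub_im, Complex.one_im, hwim]; ring
  -- key bound: β' ≤ α / (-log r)
  have hkey : EuclideanGeometry.angle (0:ℂ) 1 (z ^ (t:ℂ)) ≤ α / (-(Real.log r)) := by
    rw [ang_eq_abs_arg _ hw1]
    have hvv : (1 - z ^ (t:ℂ)).im < 0 := by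
      rw [hv'im2]; linarith only [mul_pos hρ0 hsin_t]
    refine (abs_arg_le_ratio (hv're2 ▸ hx't) hvv).trans ?_
    rw [hv're2, hv'im2, neg_neg]
    rw [div_le_div_iff₀ hx't hlr0]
    have hsle : Real.sin (t*α) ≤ t*α := Real.sin_le htα.le
    have m1 : ρ * Real.sin (t*α) ≤ ρ * (t*α) := mul_le_mul_of_nonneg_left hsle hρ0.le
    have m2 : ρ * Real.sin (t*α) * (-(Real.log r)) ≤ ρ * (t*α) * (-(Real.log r)) :=
      mul_le_mul_of_nonneg_right m1 hlr0.le
    have m3 : ρ * (t*α) * (-(Real.log r)) = α * (ρ * (-(t * Real.log r))) := by ring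
    have m4 : α * (ρ * (-(t * Real.log r))) ≤ α * (1 - ρ) :=
      mul_le_mul_of_nonneg_left hρs hα.le
    have m5 : ρ * Real.cos (t*α) ≤ ρ * 1 := mul_le_mul_of_nonneg_left hcos_t hρ0.le
    have m6 : α * (1 - ρ) ≤ α * (1 - ρ * Real.cos (t*α)) :=
      mul_le_mul_of_nonneg_left (by linarith only [m5]) hα.le
    linarith only [m2, m3, m4, m6]
  have hEθ : 0 < E * θ := mul_pos hE0 hθ
  have hfinE : E * θ ≤ ε * θ := mul_le_mul_of_nonneg_right hEε hθ.le
  -- final case split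
  rcases le_or_gt r (Real.exp (-(2*α/(E*θ)))) with hcase|hcase
  · -- Case A: r small
    have hlog : Real.log r ≤ -(2*α/(E*θ)) := by
      have h := Real.log_le_log hr hcase
      rwa [Real.log_exp] at h
    have h2 : 2*α/(E*θ) ≤ -(Real.log r) := by linarith only [hlog]
    have h3 : EuclideanGeometry.angle (0:ℂ) 1 (z ^ (t:ℂ)) ≤ E*θ/2 := by
      refine hkey.trans ?_
      rw [div_le_iff₀ hlr0]
      have h5 : E*θ/2 * (2*α/(E*θ)) = α := by field_simp
      have h6 : E*θ/2 * (2*α/(E*θ)) ≤ E*θ/2 * (-(Real.log r)) :=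
        mul_le_mul_of_nonneg_left h2 (by positivity)
      linarith only [h5, h6]
    linarith only [h3, hfinE, hEθ]
  · -- Case B: r ≥ 1/C
    have hrC : 1/C ≤ r := by
      have h1 : 2*α/(E*θ) ≤ 2/E := by
        rw [div_le_div_iff₀ hEθ hE0]
        nlinarith only [mul_le_mul_of_nonneg_left hαθ.le hE0.le]
      have h2 : Real.exp (-(2/E)) ≤ Real.exp (-(2*α/(E*θ))) :=
        Real.exp_le_exp.mpr (by linarith only [h1])
      have h3 : (1:ℝ)/C = Real.exp (-(2/E)) := by
        rw [Real.exp_neg, hCdef, one_div]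
      linarith only [h2, h3, hcase]
    have hl1r : 1 - r ≤ -(Real.log r) := by
      have h := Real.log_le_sub_one_of_pos hr; linarith only [h]
    have h1x : 1 - r * Real.cos α ≤ (1-r) + α^2/2 := by
      have p1 : 0 ≤ (1-r) * (1 - Real.cos α) :=
        mul_nonneg (by linarith only [hr1]) (by linarith only [hcosα1])
      linarith only [p1, hcosα2]
    have hylb : 1/C * (2/π * α) ≤ r * Real.sin α :=
      mul_le_mul hrC hsinJ (by positivity) hr.le
    rcases le_or_gt (α^2) (1-r) with hsub|hsub
    · -- Case B1
      have h1r0 : 0 < 1 - r := lt_of_lt_of_le (by positivity) hsub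
      have h3 : 1 - r * Real.cos α ≤ 3/2 * (1-r) := by linarith only [h1x, hsub]
      have h4 : 1/C * (2/π * α) < 3 * (δ*θ) * (1-r) := by
        have m := mul_le_mul_of_nonneg_left h3 (by positivity : (0:ℝ) ≤ 2*(δ*θ))
        linarith only [hylb, hy_lt, m]
      have h5 : α / (-(Real.log r)) ≤ α / (1-r) :=
        div_le_div_of_nonneg_left hα.le h1r0 hl1r
      have h6 : α / (1-r) < E*θ/2 := by
        rw [div_lt_iff₀ h1r0]
        have m := mul_lt_mul_of_pos_right h4 (by positivity : (0:ℝ) < π*C/2)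
        have e1 : (1/C * (2/π * α)) * (π*C/2) = α := by field_simp
        have e2 : 3 * (δ*θ) * (1-r) * (π*C/2) = (δ * (3*π*C)) * (θ*(1-r)) / 2 := by
          ring
        have e3 : (δ * (3*π*C)) * (θ*(1-r)) ≤ E * (θ*(1-r)) :=
          mul_le_mul_of_nonneg_right hδ1 (by positivity)
        nlinarith only [m, e1, e2, e3]
      linarith only [hkey, h5, h6, hfinE, hEθ]
    · -- Case B2: contradiction
      exfalso
      have h3 : 1 - r * Real.cos α < 3/2 * α^2 := by linarith only [h1x, hsub]
      have h4 : 1/C * (2/π * α) < 3 * (δ*θ) * α^2 := by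
        have m := mul_lt_mul_of_pos_left h3 (by positivity : (0:ℝ) < 2*(δ*θ))
        have hyp : 0 < r * Real.sin α := by positivity
        nlinarith only [hylb, hy_lt, m]
      have m := mul_lt_mul_of_pos_right h4 (by positivity : (0:ℝ) < π*C)
      have e1 : (1/C * (2/π * α)) * (π*C) = 2*α := by field_simp
      have e2 : α^2 ≤ (π/2) * α := by
        nlinarith only [mul_nonneg (by linarith only [hαπ2] : (0:ℝ) ≤ π/2 - α) hα.le]
      have e3 : (δ*θ) * (α^2) ≤ (δ*(π/2)) * ((π/2)*α) :=
        mul_le_mul (mul_le_mul_of_nonneg_left hθπ hδ0.le) e2 (sq_nonneg α)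
          (by positivity)
      have e4 : 3 * ((δ*(π/2)) * ((π/2)*α)) * (π*C) = (δ * (π^3*C)) * (3/4*α) := by
        ring
      have e5 : (δ * (π^3*C)) * (3/4*α) ≤ 1 * (3/4*α) :=
        mul_le_mul_of_nonneg_right hδ2 (by positivity)
      nlinarith only [m, e1, e3, e4, e5, hα,
        mul_le_mul_of_nonneg_right e3 (by positivity : (0:ℝ) ≤ 3*(π*C))]
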